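/- arXiv:1911.08632 — 7 statements merged into one kernel-verified Lean document; each statement's English description precedes it below -/
import Mathlib

section
/- Flow graph composition is congruent with flow interface composition: if flow graphs H1 and H2 have interfaces I1 and I2 respectively, and their disjoint union H1 ⊙ H2 is a flow graph, then its interface equals I1 ⊕ I2; conversely, if I1 ⊕ I2 is defined, then the disjoint union of H1 and H2 is a flow graph with interface I1 ⊕ I2. -/
def FlowEqn {ι M : Type*} [AddCommMonoid M] (N : Finset ι)
    (e : ι → ι → M → M) (inf flo : ι → M) : Prop :=
  ∀ n ∈ N, flo n = inf n + ∑ n' ∈ N, e n' n (flo n')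

/-- A flow interface: a domain, an inflow, and an outflow. -/
structure Intf (ι M : Type*) where
  dom : Finset ι
  inflow : ι → M
  outflow : ι → M

/-- The outflow of the graph (N, e, flo) at a node n. -/
def outflowOf {ι M : Type*} [AddCommMonoid M] (N : Finset ι)
    (e : ι → ι → M → M) (flo : ι → M) (n : ι) : M :=
  ∑ n' ∈ N, e n' n (flo n')

/-- I is the interface of the flow graph (N, e, flo): its domain is N, its inflow
satisfies the flow equation, and its outflow is the outflow of the graph. -/
def IsIntf {ι M : Type*} [AddCommMonoid M] (N : Finset ι)
    (e : ι → ι → M → M) (flo : ι → M) (I : Intf ι M) : Prop :=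
  I.dom = N ∧ FlowEqn N e I.inflow flo ∧ ∀ n ∉ N, I.outflow n = outflowOf N e flo n

/-- I is the composition I1 ⊕ I2 of flow interfaces. -/
def IntComp {ι M : Type*} [AddCommMonoid M] [DecidableEq ι] (I1 I2 I : Intf ι M) : Prop :=
  Disjoint I1.dom I2.dom ∧ I.dom = I1.dom ∪ I2.dom ∧
  (∀ n ∈ I1.dom, I1.inflow n = I.inflow n + I2.outflow n) ∧
  (∀ n ∈ I2.dom, I2.inflow n = I.inflow n + I1.outflow n) ∧
  (∀ n ∉ I.dom, I.outflow n = I1.outflow n + I2.outflow n)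

/-- The edge labelling of the disjoint union of two graphs. -/
def unionE {ι M : Type*} [DecidableEq ι] (N1 : Finset ι)
    (e1 e2 : ι → ι → M → M) : ι → ι → M → M :=
  fun a b => if a ∈ N1 then e1 a b else e2 a b

/-- The flow of the disjoint union of two graphs. -/
def unionFlow {ι M : Type*} [DecidableEq ι] (N1 : Finset ι)
    (flo1 flo2 : ι → M) : ι → M :=
  fun a => if a ∈ N1 then flo1 a else flo2 a

/-- Congruence of flow graph composition and interface composition: if the disjoint
union of flow graphs H1, H2 is a flow graph then its interface is I1 ⊕ I2; conversely
if I1 ⊕ I2 is defined then the disjoint union is a flow graph with interface I1 ⊕ I2. -/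
theorem stmt3 {ι M : Type*} [AddCommMonoid M] [DecidableEq ι]
    (hcanc : ∀ m1 m2 m3 : M, m1 + m2 = m1 + m3 → m2 = m3)
    (N1 N2 : Finset ι) (e1 e2 : ι → ι → M → M) (flo1 flo2 : ι → M)
    (hdisj : Disjoint N1 N2)
    (hFG1 : ∃ inf1, FlowEqn N1 e1 inf1 flo1)
    (hFG2 : ∃ inf2, FlowEqn N2 e2 inf2 flo2)
    (I1 I2 : Intf ι M)
    (hI1 : IsIntf N1 e1 flo1 I1) (hI2 : IsIntf N2 e2 flo2 I2) :
    (∀ infU, FlowEqn (N1 ∪ N2) (unionE N1 e1 e2) infU (unionFlow N1 flo1 flo2) →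
        ∃ I, IsIntf (N1 ∪ N2) (unionE N1 e1 e2) (unionFlow N1 flo1 flo2) I ∧
          IntComp I1 I2 I) ∧
    (∀ I, IntComp I1 I2 I →
        ∃ infU, FlowEqn (N1 ∪ N2) (unionE N1 e1 e2) infU (unionFlow N1 flo1 flo2) ∧
          IsIntf (N1 ∪ N2) (unionE N1 e1 e2) (unionFlow N1 flo1 flo2) I) := by
  obtain ⟨hd1, hf1, ho1⟩ := hI1
  obtain ⟨hd2, hf2, ho2⟩ := hI2
  have key : ∀ n, ∑ n' ∈ N1 ∪ N2, unionE N1 e1 e2 n' n (unionFlow N1 flo1 flo2 n')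
      = (∑ n' ∈ N1, e1 n' n (flo1 n')) + ∑ n' ∈ N2, e2 n' n (flo2 n') := by
    intro n
    rw [Finset.sum_union hdisj]
    congr 1
    · exact Finset.sum_congr rfl fun x hx => by simp [unionE, unionFlow, hx]
    · refine Finset.sum_congr rfl fun x hx => ?_
      have hx1 : x ∉ N1 := fun h => (Finset.disjoint_left.mp hdisj h) hx
      simp [unionE, unionFlow, hx1]
  constructor
  · intro infU hU
    refine ⟨⟨N1 ∪ N2, infU, outflowOf (N1 ∪ N2) (unionE N1 e1 e2) (unionFlow N1 flo1 flo2)⟩,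
      ⟨rfl, hU, fun n _ => rfl⟩, ?_, ?_, ?_, ?_, ?_⟩
    · rw [hd1, hd2]; exact hdisj
    · rw [hd1, hd2]
    · rw [hd1]
      intro n hn
      have hn2 : n ∉ N2 := Finset.disjoint_left.mp hdisj hn
      have h1 := hf1 n hn
      have h2 := hU n (Finset.mem_union_left _ hn)
      rw [key] at h2
      simp only [unionFlow, if_pos hn] at h2
      apply hcanc (∑ n' ∈ N1, e1 n' n (flo1 n'))
      rw [ho2 n hn2]
      calc (∑ n' ∈ N1, e1 n' n (flo1 n')) + I1.inflow n
          = I1.inflow n + ∑ n' ∈ N1, e1 n' n (flo1 n') := add_comm _ _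
        _ = flo1 n := h1.symm
        _ = infU n + ((∑ n' ∈ N1, e1 n' n (flo1 n')) + ∑ n' ∈ N2, e2 n' n (flo2 n')) := h2
        _ = (∑ n' ∈ N1, e1 n' n (flo1 n'))
            + (infU n + outflowOf N2 e2 flo2 n) := by
              unfold outflowOf; abel
    · rw [hd2]
      intro n hn
      have hn1 : n ∉ N1 := fun h => Finset.disjoint_left.mp hdisj h hn
      have h1 := hf2 n hn
      have h2 := hU n (Finset.mem_union_right _ hn)
      rw [key] at h2
      simp only [unionFlow, if_neg hn1] at h2
      apply hcanc (∑ n' ∈ N2, e2 n' n (flo2 n'))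
      rw [ho1 n hn1]
      calc (∑ n' ∈ N2, e2 n' n (flo2 n')) + I2.inflow n
          = I2.inflow n + ∑ n' ∈ N2, e2 n' n (flo2 n') := add_comm _ _
        _ = flo2 n := h1.symm
        _ = infU n + ((∑ n' ∈ N1, e1 n' n (flo1 n')) + ∑ n' ∈ N2, e2 n' n (flo2 n')) := h2
        _ = (∑ n' ∈ N2, e2 n' n (flo2 n'))
            + (infU n + outflowOf N1 e1 flo1 n) := by
              unfold outflowOf; abel
    · intro n hn
      simp only [Finset.mem_union, not_or] at hn
      show outflowOf _ _ _ n = _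
      rw [ho1 n hn.1, ho2 n hn.2]
      unfold outflowOf
      rw [key]
  · intro I hC
    obtain ⟨hdis, hdom, h1, h2, hout⟩ := hC
    rw [hd1] at h1
    rw [hd2] at h2
    rw [hd1, hd2] at hdom
    have hfe : FlowEqn (N1 ∪ N2) (unionE N1 e1 e2) I.inflow (unionFlow N1 flo1 flo2) := by
      intro n hn
      rw [key]
      rcases Finset.mem_union.mp hn with hn1 | hn2
      · have hn2 : n ∉ N2 := Finset.disjoint_left.mp hdisj hn1
        simp only [unionFlow, if_pos hn1]
        rw [hf1 n hn1, h1 n hn1, ho2 n hn2]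
        unfold outflowOf; abel
      · have hn1 : n ∉ N1 := fun h => Finset.disjoint_left.mp hdisj h hn2
        simp only [unionFlow, if_neg hn1]
        rw [hf2 n hn2, h2 n hn2, ho1 n hn1]
        unfold outflowOf; abel
    refine ⟨I.inflow, hfe, hdom, hfe, ?_⟩
    intro n hn
    simp only [Finset.mem_union, not_or] at hn
    rw [hout n (by rw [hdom]; simp [hn.1, hn.2]), ho1 n hn.1, ho2 n hn.2]
    unfold outflowOf
    rw [key]
end

section
/- The set of flow interfaces with interface composition ⊕ and the empty interface forms a separation algebra: ⊕ is a partial, commutative, associative operation with the empty interface as identity, and ⊕ is cancellative (I1 ⊕ I2 = I1 ⊕ I3 with both defined implies I2 = I3). -/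
/-- The empty interface. -/
def emptyIntf (ι M : Type*) [AddCommMonoid M] : Intf ι M :=
  ⟨∅, fun _ => 0, fun _ => 0⟩

/-- Flow interfaces with interface composition form a separation algebra: the
(partial) composition is commutative, associative, has the empty interface as
identity, and is cancellative. -/
theorem stmt4 {ι M : Type*} [AddCommMonoid M] [DecidableEq ι]
    (hcanc : ∀ m1 m2 m3 : M, m1 + m2 = m1 + m3 → m2 = m3) :
    (∀ I1 I2 I : Intf ι M, IntComp I1 I2 I ↔ IntComp I2 I1 I) ∧
    (∀ I1 I2 I3 I12 I : Intf ι M, IntComp I1 I2 I12 → IntComp I12 I3 I →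
        ∃ I23, IntComp I2 I3 I23 ∧ IntComp I1 I23 I) ∧
    (∀ I : Intf ι M, IntComp (emptyIntf ι M) I I) ∧
    (∀ I1 I2 I3 I : Intf ι M, IntComp I1 I2 I → IntComp I1 I3 I →
        I2.dom = I3.dom ∧ (∀ n ∈ I2.dom, I2.inflow n = I3.inflow n) ∧
        (∀ n ∉ I2.dom, I2.outflow n = I3.outflow n)) := by
  refine ⟨?_, ?_, ?_, ?_⟩
  · -- commutativity
    have h : ∀ I1 I2 I : Intf ι M, IntComp I1 I2 I → IntComp I2 I1 I := by
      rintro I1 I2 I ⟨hd, hdom, h1, h2, h3⟩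
      exact ⟨hd.symm, by rw [hdom, Finset.union_comm], h2, h1,
        fun n hn => by rw [h3 n hn, add_comm]⟩
    exact fun I1 I2 I => ⟨h I1 I2 I, h I2 I1 I⟩
  · -- associativity
    rintro I1 I2 I3 I12 I ⟨hd12, hdom12, ha, hb, hc⟩ ⟨hd, hdom, hA, hB, hC⟩
    have h1sub : I1.dom ⊆ I12.dom := hdom12 ▸ Finset.subset_union_left
    have h2sub : I2.dom ⊆ I12.dom := hdom12 ▸ Finset.subset_union_right
    refine ⟨⟨I2.dom ∪ I3.dom, fun n => I.inflow n + I1.outflow n,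
      fun n => I2.outflow n + I3.outflow n⟩, ⟨?_, rfl, ?_, ?_, fun n _ => rfl⟩,
      ?_, ?_, ?_, ?_, ?_⟩
    · exact Finset.disjoint_of_subset_left h2sub hd
    · intro n hn
      have : I12.inflow n = I.inflow n + I3.outflow n := hA n (h2sub hn)
      rw [hb n hn, this]; dsimp; abel
    · intro n hn
      have hn12 : n ∉ I12.dom := Finset.disjoint_right.mp hd hn
      have : I12.outflow n = I1.outflow n + I2.outflow n := hc n hn12
      rw [hB n hn, this]; dsimp; abel
    · refine Finset.disjoint_union_right.mpr ⟨hd12, Finset.disjoint_of_subset_left h1sub hd⟩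
    · dsimp; rw [hdom, hdom12, Finset.union_assoc]
    · intro n hn
      have : I12.inflow n = I.inflow n + I3.outflow n := hA n (h1sub hn)
      rw [ha n hn, this]; dsimp; abel
    · intro n _; rfl
    · intro n hn
      have hn12 : n ∉ I12.dom := fun h => hn (hdom ▸ Finset.mem_union_left _ h)
      rw [hC n hn, hc n hn12]; dsimp; abel
  · -- identity
    intro I
    refine ⟨Finset.disjoint_left.mpr (fun a h => absurd h (Finset.notMem_empty a)),
      (Finset.empty_union _).symm, fun n hn => absurd hn (Finset.notMem_empty n),
      fun n _ => (add_zero _).symm, fun n _ => (zero_add _).symm⟩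
  · -- cancellation
    rintro I1 I2 I3 I ⟨hd2, hdom2, ha2, hb2, hc2⟩ ⟨hd3, hdom3, ha3, hb3, hc3⟩
    have hdeq : I2.dom = I3.dom := by
      ext n
      constructor
      · intro hn
        have hnI : n ∈ I.dom := hdom2 ▸ Finset.mem_union_right _ hn
        have := hdom3 ▸ hnI
        rcases Finset.mem_union.mp this with h | h
        · exact absurd hn (Finset.disjoint_left.mp hd2 h)
        · exact h
      · intro hn
        have hnI : n ∈ I.dom := hdom3 ▸ Finset.mem_union_right _ hn
        have := hdom2 ▸ hnI
        rcases Finset.mem_union.mp this with h | h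
        · exact absurd hn (Finset.disjoint_left.mp hd3 h)
        · exact h
    refine ⟨hdeq, fun n hn => by rw [hb2 n hn, hb3 n (hdeq ▸ hn)], ?_⟩
    intro n hn
    by_cases hn1 : n ∈ I1.dom
    · exact hcanc _ _ _ ((ha2 n hn1).symm.trans (ha3 n hn1))
    · have hnI : n ∉ I.dom := by
        rw [hdom2]; simp [hn1, hn]
      exact hcanc _ _ _ ((hc2 n hnI).symm.trans (hc3 n hnI))
end

section
/- Interface composition is cancellative: if I1 ⊕ I2 and I1 ⊕ I3 are both defined and equal, then I2 = I3 (they have the same domain, inflow, and outflow). -/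
/-- Interface composition is cancellative: if I1 ⊕ I2 and I1 ⊕ I3 are both defined
and equal, then I2 = I3 (same domain, inflow, and outflow). -/
theorem stmt5 {ι M : Type*} [AddCommMonoid M] [DecidableEq ι]
    (hcanc : ∀ m1 m2 m3 : M, m1 + m2 = m1 + m3 → m2 = m3)
    (I1 I2 I3 I : Intf ι M)
    (h12 : IntComp I1 I2 I) (h13 : IntComp I1 I3 I) :
    I2.dom = I3.dom ∧ (∀ n ∈ I2.dom, I2.inflow n = I3.inflow n) ∧
    (∀ n ∉ I2.dom, I2.outflow n = I3.outflow n) := by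
  obtain ⟨d12, u12, a12, b12, c12⟩ := h12
  obtain ⟨d13, u13, a13, b13, c13⟩ := h13
  have hdom : I2.dom = I3.dom := by
    have h2 : I2.dom = I.dom \ I1.dom := by
      rw [u12, Finset.union_sdiff_left, Finset.sdiff_eq_self_of_disjoint d12.symm]
    have h3 : I3.dom = I.dom \ I1.dom := by
      rw [u13, Finset.union_sdiff_left, Finset.sdiff_eq_self_of_disjoint d13.symm]
    rw [h2, h3]
  refine ⟨hdom, fun n hn => ?_, fun n hn => ?_⟩
  · rw [b12 n hn, b13 n (hdom ▸ hn)]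
  · by_cases h1 : n ∈ I1.dom
    · exact hcanc (I.inflow n) _ _ ((a12 n h1).symm.trans (a13 n h1))
    · have hI : n ∉ I.dom := by
        rw [u12]; simp [h1, hn]
      exact hcanc (I1.outflow n) _ _ ((c12 n hI).symm.trans (c13 n hI))
end

section
/- Path-expansion of the flow equation: let M be a commutative monoid, E a set of endomorphisms of M closed under + and ∘, (N, e) a finite graph with edge functions in E, and suppose FlowEqn(in, e, flow) holds. Then for every L ≥ 1 and n ∈ N, flow(n) = in(n) + Σ over nonempty paths n1,…,nk ∈ N with 1 ≤ k < L of e(nk, n)(…(e(n1, n2)(in(n1)))…) + Σ over n1,…,nL ∈ N of e(nL, n)(…(e(n1, n2)(flow(n1)))…). -/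
/-- `chainFn e n1 [n2,…,nk] n m = e nk n (… (e n2 n3 (e n1 n2 m)) …)`:
propagate the value m along the path n1, n2, …, nk and finally to n. -/
def chainFn {ι M : Type*} (e : ι → ι → M → M) : ι → List ι → ι → M → M
  | n1, [], n => e n1 n
  | n1, n2 :: rest, n => fun m => chainFn e n2 rest n (e n1 n2 m)

/-- The value contributed at node n by the path given by the (nonempty) list,
starting from the value of f at the first node of the path. -/
def pathVal {ι M : Type*} [Zero M] (e : ι → ι → M → M) (f : ι → M) (n : ι) :
    List ι → M
  | [] => 0
  | n1 :: rest => chainFn e n1 rest n (f n1)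

lemma add_map_sum {M : Type*} [AddCommMonoid M] (f : M → M)
    (hf : ∀ a b, f (a + b) = f a + f b) {α : Type*} {s : Finset α}
    (hs : s.Nonempty) (g : α → M) :
    f (∑ x ∈ s, g x) = ∑ x ∈ s, f (g x) := by
  induction hs using Finset.Nonempty.cons_induction with
  | singleton a => simp
  | cons a s ha hs ih => simp [Finset.sum_cons, hf, ih]

lemma chainFn_mem {ι M : Type*} (e : ι → ι → M → M) (E : Set (M → M))
    (hE : ∀ a b, e a b ∈ E) (hEcomp : ∀ f ∈ E, ∀ g ∈ E, (f ∘ g) ∈ E) :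
    ∀ (l : List ι) (n1 n : ι), chainFn e n1 l n ∈ E := by
  intro l
  induction l with
  | nil => intro n1 n; exact hE n1 n
  | cons n2 rest ih =>
    intro n1 n
    exact hEcomp _ (ih n2 n) _ (hE n1 n2)

/-- Path-expansion of the flow equation. -/
theorem stmt9 {ι M : Type*} [AddCommMonoid M] (N : Finset ι)
    (e : ι → ι → M → M) (inf flo : ι → M)
    (E : Set (M → M)) (hE : ∀ a b, e a b ∈ E)
    (hEendo : ∀ f ∈ E, ∀ a b : M, f (a + b) = f a + f b)
    (hEcomp : ∀ f ∈ E, ∀ g ∈ E, (f ∘ g) ∈ E)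
    (hEadd : ∀ f ∈ E, ∀ g ∈ E, (fun m => f m + g m) ∈ E)
    (hflow : FlowEqn N e inf flo) (L : ℕ) (hL : 1 ≤ L) (n : ι) (hn : n ∈ N) :
    flo n = inf n
      + ∑ k ∈ Finset.Ico 1 L, ∑ p : Fin k → ↥N,
          pathVal e inf n (List.ofFn fun i => (p i : ι))
      + ∑ p : Fin L → ↥N, pathVal e flo n (List.ofFn fun i => (p i : ι)) := by
  have hNne : N.Nonempty := ⟨n, hn⟩
  have hNune : (Finset.univ : Finset ↥N).Nonempty := by
    simpa [Finset.univ_nonempty_iff, Finset.nonempty_coe_sort] using hNne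
  -- key step lemma
  have key : ∀ (K : ℕ),
      (∑ p : Fin (K + 1) → ↥N, pathVal e flo n (List.ofFn fun i => (p i : ι)))
      = (∑ p : Fin (K + 1) → ↥N, pathVal e inf n (List.ofFn fun i => (p i : ι)))
        + ∑ p : Fin (K + 1 + 1) → ↥N, pathVal e flo n (List.ofFn fun i => (p i : ι)) := by
    intro K
    have hexp : ∀ p : Fin (K + 1) → ↥N,
        pathVal e flo n (List.ofFn fun i => (p i : ι))
        = pathVal e inf n (List.ofFn fun i => (p i : ι))
          + ∑ n' ∈ N, pathVal e flo n ((n' : ι) :: List.ofFn fun i => (p i : ι)) := by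
      intro p
      have h0 : (List.ofFn fun i => (p i : ι))
          = (p 0 : ι) :: List.ofFn fun i : Fin K => (p i.succ : ι) := by
        rw [List.ofFn_succ]
      rw [h0]
      set rest := List.ofFn fun i : Fin K => (p i.succ : ι) with hrest
      show chainFn e (p 0 : ι) rest n (flo (p 0 : ι)) = _
      have hmem := chainFn_mem e E hE hEcomp rest (p 0 : ι) n
      rw [hflow (p 0 : ι) (p 0).2,
        hEendo _ hmem, add_map_sum _ (hEendo _ hmem) hNne]
      rfl
    rw [Finset.sum_congr rfl (fun p _ => hexp p), Finset.sum_add_distrib]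
    congr 1
    calc (∑ p : Fin (K + 1) → ↥N, ∑ n' ∈ N,
            pathVal e flo n ((n' : ι) :: List.ofFn fun i => (p i : ι)))
        = ∑ p : Fin (K + 1) → ↥N, ∑ n' : ↥N,
            pathVal e flo n ((n' : ι) :: List.ofFn fun i => (p i : ι)) :=
          Finset.sum_congr rfl fun p _ => (Finset.sum_coe_sort N _).symm
      _ = ∑ x : ↥N × (Fin (K + 1) → ↥N),
            pathVal e flo n ((x.1 : ι) :: List.ofFn fun i => (x.2 i : ι)) := by
          rw [Fintype.sum_prod_type, Finset.sum_comm]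
      _ = ∑ p : Fin (K + 1 + 1) → ↥N,
            pathVal e flo n (List.ofFn fun i => (p i : ι)) := by
          refine Fintype.sum_equiv (Fin.consEquiv fun _ => ↥N) _ _ ?_
          rintro ⟨a, p⟩
          simp only [Fin.consEquiv_apply]
          congr 1
          rw [List.ofFn_succ]
          simp
  -- main induction
  obtain ⟨L, rfl⟩ : ∃ L', L = L' + 1 := ⟨L - 1, by omega⟩
  clear hL
  induction L with
  | zero =>
    simp only [Finset.Ico_self, Finset.sum_empty, add_zero]
    have : (∑ p : Fin 1 → ↥N, pathVal e flo n (List.ofFn fun i => (p i : ι)))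
        = ∑ n' ∈ N, e n' n (flo n') := by
      rw [Fintype.sum_equiv (Equiv.funUnique (Fin 1) ↥N) _
        (fun a : ↥N => e (a : ι) n (flo (a : ι))) (fun p => by simp [pathVal, chainFn])]
      exact Finset.sum_coe_sort N (fun a => e a n (flo a))
    rw [this]
    exact hflow n hn
  | succ K ih =>
    rw [Finset.sum_Ico_succ_top (Nat.le_add_left 1 K)
      (fun k => ∑ p : Fin k → ↥N, pathVal e inf n (List.ofFn fun i => (p i : ι))), ih, key K]
    abel
end

section
/- Nilpotent edge functions give unique flows: let (M, +, 0) be a positive cancellative commutative monoid and E a closed set of endomorphisms of M that is nilpotent, i.e., there exists p > 1 with e^p = 0 (the constant-zero function) for every e ∈ E. Then for every finite graph (N, e) labelled by E and every inflow in : N → M, there is at most one flow : N → M satisfying FlowEqn(in, e, flow). -/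
namespace Stmt10Aux

variable {ι M : Type*} [AddCommMonoid M]

/-- `Dom x y` : `x` is a "subterm" of `y`, i.e. `y = x + r`. -/
def Dom (x y : M) : Prop := ∃ r, y = x + r

lemma Dom.rfl {x : M} : Dom x x := ⟨0, (add_zero x).symm⟩

lemma Dom.trans {x y z : M} (h1 : Dom x y) (h2 : Dom y z) : Dom x z := by
  obtain ⟨r, rfl⟩ := h1; obtain ⟨s, rfl⟩ := h2
  exact ⟨r + s, add_assoc x r s⟩

lemma Dom.add {x y u v : M} (h1 : Dom x y) (h2 : Dom u v) : Dom (x + u) (y + v) := by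
  obtain ⟨r, rfl⟩ := h1; obtain ⟨s, rfl⟩ := h2
  exact ⟨r + s, add_add_add_comm x r u s⟩

lemma dom_sum {κ : Type*} {s : Finset κ} {f g : κ → M}
    (h : ∀ i ∈ s, Dom (f i) (g i)) : Dom (∑ i ∈ s, f i) (∑ i ∈ s, g i) := by
  classical
  induction s using Finset.induction with
  | empty => exact Dom.rfl
  | @insert a t hx ih =>
    rw [Finset.sum_insert hx, Finset.sum_insert hx]
    exact Dom.add (h a (Finset.mem_insert_self a t))
      (ih fun i hi => h i (Finset.mem_insert_of_mem hi))

lemma dom_sum_subset {κ : Type*} [DecidableEq κ] {s t : Finset κ} (hst : s ⊆ t) (f : κ → M) :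
    Dom (∑ i ∈ s, f i) (∑ i ∈ t, f i) :=
  ⟨∑ i ∈ t \ s, f i, by rw [add_comm]; exact (Finset.sum_sdiff hst).symm⟩

lemma dom_single {κ : Type*} [DecidableEq κ] {s : Finset κ} {i : κ} (hi : i ∈ s) (f : κ → M) :
    Dom (f i) (∑ j ∈ s, f j) :=
  ⟨∑ j ∈ s.erase i, f j, (Finset.add_sum_erase s f hi).symm⟩

lemma endo_zero {f : M → M} (hcanc : ∀ a b c : M, a + b = a + c → b = c)
    (hf : ∀ a b : M, f (a + b) = f a + f b) : f 0 = 0 := by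
  have := hf 0 0
  rw [add_zero] at this
  exact hcanc (f 0) (f 0) 0 (by rw [← this, add_zero])

lemma endo_sum {κ : Type*} {f : M → M} (hcanc : ∀ a b c : M, a + b = a + c → b = c)
    (hf : ∀ a b : M, f (a + b) = f a + f b) (s : Finset κ) (g : κ → M) :
    f (∑ i ∈ s, g i) = ∑ i ∈ s, f (g i) := by
  classical
  induction s using Finset.induction with
  | empty => simpa using endo_zero hcanc hf
  | @insert a t hx ih =>
    rw [Finset.sum_insert hx, Finset.sum_insert hx, hf, ih]

lemma endo_dom {f : M → M} (hf : ∀ a b : M, f (a + b) = f a + f b)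
    {x y : M} (h : Dom x y) : Dom (f x) (f y) := by
  obtain ⟨r, rfl⟩ := h; exact ⟨f r, hf x r⟩

/-- Nonempty pointwise sums of members of a closed `E` stay in `E`. -/
lemma sum_mem_E {κ : Type*} {E : Set (M → M)}
    (hEadd : ∀ f ∈ E, ∀ g ∈ E, (fun m => f m + g m) ∈ E)
    (t : Finset κ) (ht : t.Nonempty) (F : κ → M → M) (hF : ∀ i ∈ t, F i ∈ E) :
    (fun m => ∑ i ∈ t, F i m) ∈ E := by
  classical
  induction t using Finset.induction with
  | empty => exact absurd ht (by simp)
  | @insert a s hx ih =>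
    rcases s.eq_empty_or_nonempty with rfl | hs
    · simpa using hF a (Finset.mem_insert_self a ∅)
    · have h1 : F a ∈ E := hF a (Finset.mem_insert_self a s)
      have h2 : (fun m => ∑ i ∈ s, F i m) ∈ E :=
        ih hs fun i hi => hF i (Finset.mem_insert_of_mem hi)
      have := hEadd _ h1 _ h2
      simpa [Finset.sum_insert hx] using this

/-- Iterated edge compositions along paths of length `k+1`. -/
def flowC (N : Finset ι) (e : ι → ι → M → M) : ℕ → ι → ι → M → M
  | 0 => e
  | k + 1 => fun a b m => ∑ n' ∈ N, e n' b (flowC N e k a n' m)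

/-- The flow-independent part after `k+1` unfoldings. -/
def flowA (N : Finset ι) (e : ι → ι → M → M) (inf : ι → M) : ℕ → ι → M
  | 0 => inf
  | k + 1 => fun n => inf n + ∑ n' ∈ N, e n' n (flowA N e inf k n')

lemma flow_unfold {N : Finset ι} {e : ι → ι → M → M} {inf flo : ι → M}
    (hcanc : ∀ a b c : M, a + b = a + c → b = c)
    (he : ∀ a b, ∀ x y : M, e a b (x + y) = e a b x + e a b y)
    (hfe : FlowEqn N e inf flo) :
    ∀ k, ∀ n ∈ N, flo n = flowA N e inf k n + ∑ n' ∈ N, flowC N e k n' n (flo n') := by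
  intro k
  induction k with
  | zero => exact hfe
  | succ k ih =>
    intro n hn
    calc flo n = inf n + ∑ n' ∈ N, e n' n (flo n') := hfe n hn
    _ = inf n + ∑ n' ∈ N,
          e n' n (flowA N e inf k n' + ∑ n'' ∈ N, flowC N e k n'' n' (flo n'')) := by
        congr 1
        exact Finset.sum_congr rfl fun n' hn' => by rw [← ih n' hn']
    _ = inf n + ∑ n' ∈ N, (e n' n (flowA N e inf k n')
          + ∑ n'' ∈ N, e n' n (flowC N e k n'' n' (flo n''))) := by
        congr 1
        refine Finset.sum_congr rfl fun n' _ => ?_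
        rw [he, endo_sum hcanc (he n' n)]
    _ = (inf n + ∑ n' ∈ N, e n' n (flowA N e inf k n'))
          + ∑ n' ∈ N, ∑ n'' ∈ N, e n' n (flowC N e k n'' n' (flo n'')) := by
        rw [Finset.sum_add_distrib, add_assoc]
    _ = flowA N e inf (k + 1) n
          + ∑ n'' ∈ N, ∑ n' ∈ N, e n' n (flowC N e k n'' n' (flo n'')) := by
        rw [Finset.sum_comm]; rfl
    _ = _ := rfl

end Stmt10Aux

/-- Nilpotent edge functions give unique flows: if the (closed) set of
endomorphism edge functions is nilpotent, then for every graph and inflow there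
is at most one flow satisfying the flow equation. -/
theorem stmt10 {ι M : Type*} [AddCommMonoid M]
    (hpos : ∀ a b : M, a + b = 0 → a = 0 ∧ b = 0)
    (hcanc : ∀ a b c : M, a + b = a + c → b = c)
    (E : Set (M → M))
    (hEendo : ∀ f ∈ E, ∀ a b : M, f (a + b) = f a + f b)
    (hEcomp : ∀ f ∈ E, ∀ g ∈ E, (f ∘ g) ∈ E)
    (hEadd : ∀ f ∈ E, ∀ g ∈ E, (fun m => f m + g m) ∈ E)
    (hnil : ∃ p : ℕ, 1 < p ∧ ∀ f ∈ E, f^[p] = fun _ => (0 : M))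
    (N : Finset ι) (e : ι → ι → M → M) (hE : ∀ a b, e a b ∈ E)
    (inf : ι → M) :
    ∀ flo1 flo2 : ι → M, FlowEqn N e inf flo1 → FlowEqn N e inf flo2 →
      ∀ n ∈ N, flo1 n = flo2 n := by
  classical
  open Stmt10Aux in
  obtain ⟨p, hp1, hpnil⟩ := hnil
  intro flo1 flo2 h1 h2 n hn
  have he : ∀ a b, ∀ x y : M, e a b (x + y) = e a b x + e a b y :=
    fun a b => hEendo _ (hE a b)
  -- the big sum function
  set s : M → M := fun m => ∑ q ∈ N ×ˢ N, e q.1 q.2 m with hs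
  have hsE : s ∈ E := by
    refine sum_mem_E hEadd _ ?_ _ fun q _ => hE q.1 q.2
    exact Finset.Nonempty.product ⟨n, hn⟩ ⟨n, hn⟩
  have hs0 : s^[p] = fun _ => (0 : M) := hpnil s hsE
  have hsendo : ∀ x y : M, s (x + y) = s x + s y := hEendo s hsE
  -- domination of path compositions by iterates of s
  have hdom : ∀ k, ∀ a ∈ N, ∀ b ∈ N, ∀ m : M,
      Stmt10Aux.Dom (flowC N e k a b m) (s^[k + 1] m) := by
    intro k
    induction k with
    | zero =>
      intro a ha b hb m
      have hab : (a, b) ∈ N ×ˢ N := Finset.mem_product.mpr ⟨ha, hb⟩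
      simpa [flowC, hs] using dom_single hab (fun q : ι × ι => e q.1 q.2 m)
    | succ k ih =>
      intro a ha b hb m
      have step1 : Stmt10Aux.Dom (∑ n' ∈ N, e n' b (flowC N e k a n' m))
          (∑ n' ∈ N, e n' b (s^[k + 1] m)) :=
        dom_sum fun n' hn' => endo_dom (he n' b) (ih a ha n' hn' m)
      have step2 : Stmt10Aux.Dom (∑ n' ∈ N, e n' b (s^[k + 1] m))
          (∑ q ∈ N ×ˢ N, e q.1 q.2 (s^[k + 1] m)) := by
        have hsub : N ×ˢ {b} ⊆ N ×ˢ N :=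
          Finset.product_subset_product_right (Finset.singleton_subset_iff.mpr hb)
        have hre : ∑ n' ∈ N, e n' b (s^[k + 1] m)
            = ∑ q ∈ N ×ˢ {b}, e q.1 q.2 (s^[k + 1] m) := by
          rw [Finset.sum_product]; simp
        rw [hre]
        exact dom_sum_subset hsub _
      have : s^[k + 1 + 1] m = ∑ q ∈ N ×ˢ N, e q.1 q.2 (s^[k + 1] m) := by
        rw [Function.iterate_succ_apply' s (k + 1) m]
      rw [flowC, this]
      exact Stmt10Aux.Dom.trans step1 step2
  -- at level p - 1 all path compositions vanish
  have hp0 : p - 1 + 1 = p := by omega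
  have hC0 : ∀ a ∈ N, ∀ m : M, flowC N e (p - 1) a n m = 0 := by
    intro a ha m
    obtain ⟨r, hr⟩ := hdom (p - 1) a ha n hn m
    rw [hp0, hs0] at hr
    exact (hpos _ _ hr.symm).1
  have key : ∀ flo : ι → M, FlowEqn N e inf flo → flo n = flowA N e inf (p - 1) n := by
    intro flo hfe
    have := flow_unfold hcanc he hfe (p - 1) n hn
    rw [Finset.sum_eq_zero (fun a ha => hC0 a ha (flo a)), add_zero] at this
    exact this
  rw [key flo1 h1, key flo2 h2]
end

section
/- Effectively acyclic flow graphs have unique flows: let M be a positive cancellative commutative monoid and E a closed set of endomorphisms of M. If flow : N → M satisfies FlowEqn(in, e, flow) and the flow graph (N, e, flow) is effectively acyclic — meaning for all k ≥ 1 and n1, …, nk ∈ N, applying the edge functions around the cycle n1 → n2 → ⋯ → nk → n1 to flow(n1) yields 0 — then flow is the unique solution of FlowEqn(in, e, ·) among effectively acyclic solutions. -/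
/-- Effective acyclicity: for every k ≥ 1 and nodes n1, …, nk ∈ N, propagating
flow(n1) around the cycle n1 → n2 → ⋯ → nk → n1 yields 0. -/
def EffAcyclic {ι M : Type*} [AddCommMonoid M] (N : Finset ι)
    (e : ι → ι → M → M) (flo : ι → M) : Prop :=
  ∀ (k : ℕ) (p : Fin (k + 1) → ι), (∀ i, p i ∈ N) →
    pathVal e flo (p 0) (List.ofFn p) = 0

section Aux

variable {ι M : Type*} [AddCommMonoid M]

lemma chainFn_append (e : ι → ι → M → M) :
    ∀ (l1 : List ι) (n1 mid : ι) (l2 : List ι) (n : ι) (m : M),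
      chainFn e n1 (l1 ++ mid :: l2) n m = chainFn e mid l2 n (chainFn e n1 l1 mid m) := by
  intro l1
  induction l1 with
  | nil => intros; rfl
  | cons y t ih => intro n1 mid l2 n m; exact ih y mid l2 n (e n1 y m)

lemma chainFn_snoc (e : ι → ι → M → M) (l : List ι) (n1 b n : ι) (m : M) :
    chainFn e n1 (l ++ [b]) n m = e b n (chainFn e n1 l b m) :=
  chainFn_append e l n1 b [] n m

lemma chainFn_add (e : ι → ι → M → M)
    (he : ∀ a b m1 m2, e a b (m1 + m2) = e a b m1 + e a b m2) :
    ∀ (l : List ι) (n1 n : ι) (m1 m2 : M),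
      chainFn e n1 l n (m1 + m2) = chainFn e n1 l n m1 + chainFn e n1 l n m2 := by
  intro l
  induction l with
  | nil => intro n1 n m1 m2; exact he n1 n m1 m2
  | cons y t ih =>
      intro n1 n m1 m2
      show chainFn e y t n (e n1 y (m1 + m2)) = _
      rw [he, ih]; rfl

lemma chainFn_zero (e : ι → ι → M → M) (he0 : ∀ a b, e a b 0 = 0) :
    ∀ (l : List ι) (n1 n : ι), chainFn e n1 l n 0 = 0 := by
  intro l
  induction l with
  | nil => intro n1 n; exact he0 n1 n
  | cons y t ih =>
      intro n1 n
      show chainFn e y t n (e n1 y 0) = 0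
      rw [he0]; exact ih y n

lemma eFn_sum {κ : Type*} (e : ι → ι → M → M)
    (he : ∀ a b m1 m2, e a b (m1 + m2) = e a b m1 + e a b m2)
    (he0 : ∀ a b, e a b 0 = 0) (a b : ι) (s : Finset κ) (g : κ → M) :
    e a b (∑ x ∈ s, g x) = ∑ x ∈ s, e a b (g x) := by
  classical
  induction s using Finset.cons_induction with
  | empty => simpa using he0 a b
  | cons x s hx ih => rw [Finset.sum_cons, Finset.sum_cons, he, ih]

def tailFn (N : Finset ι) (e : ι → ι → M → M) (flo : ι → M) : ℕ → ι → M
  | 0, n => flo n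
  | k + 1, n => ∑ n' ∈ N, e n' n (tailFn N e flo k n')

def aFn (N : Finset ι) (e : ι → ι → M → M) (inf : ι → M) : ℕ → ι → M
  | 0, _ => 0
  | k + 1, n => inf n + ∑ n' ∈ N, e n' n (aFn N e inf k n')

lemma flow_decomp (N : Finset ι) (e : ι → ι → M → M)
    (he : ∀ a b m1 m2, e a b (m1 + m2) = e a b m1 + e a b m2)
    (inf flo : ι → M) (hflow : FlowEqn N e inf flo) :
    ∀ k, ∀ n ∈ N, flo n = aFn N e inf k n + tailFn N e flo k n := by
  intro k
  induction k with
  | zero => intro n hn; simp [aFn, tailFn]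
  | succ k ih =>
      intro n hn
      have h1 : ∀ n' ∈ N, e n' n (flo n') =
          e n' n (aFn N e inf k n') + e n' n (tailFn N e flo k n') := by
        intro n' hn'
        rw [← he, ← ih n' hn']
      calc flo n = inf n + ∑ n' ∈ N, e n' n (flo n') := hflow n hn
        _ = inf n + ∑ n' ∈ N,
              (e n' n (aFn N e inf k n') + e n' n (tailFn N e flo k n')) := by
              rw [Finset.sum_congr rfl h1]
        _ = (inf n + ∑ n' ∈ N, e n' n (aFn N e inf k n')) +
              ∑ n' ∈ N, e n' n (tailFn N e flo k n') := by
              rw [Finset.sum_add_distrib, add_assoc]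
        _ = _ := rfl

lemma pathVal_snoc (e : ι → ι → M → M) (flo : ι → M) :
    ∀ (L : List ι), L ≠ [] → ∀ (b n : ι),
      pathVal e flo n (L ++ [b]) = e b n (pathVal e flo b L) := by
  intro L hL b n
  cases L with
  | nil => exact absurd rfl hL
  | cons x rest =>
      show chainFn e x (rest ++ [b]) n (flo x) = _
      rw [chainFn_snoc]; rfl

lemma ofFn_snoc' {α : Type*} {k : ℕ} (g : Fin k → α) (y : α) :
    List.ofFn (Fin.snoc g y) = List.ofFn g ++ [y] := by
  rw [List.ofFn_succ', List.concat_eq_append]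
  simp

lemma tail_formula (N : Finset ι) (e : ι → ι → M → M)
    (he : ∀ a b m1 m2, e a b (m1 + m2) = e a b m1 + e a b m2)
    (he0 : ∀ a b, e a b 0 = 0) (flo : ι → M) :
    ∀ k n, tailFn N e flo (k + 1) n =
      ∑ p : Fin (k + 1) → ↥N, pathVal e flo n (List.ofFn fun i => ((p i : ι))) := by
  intro k
  induction k with
  | zero =>
      intro n
      show ∑ n' ∈ N, e n' n (flo n') = _
      rw [← Finset.sum_coe_sort]
      refine Fintype.sum_equiv (Equiv.funUnique (Fin 1) ↥N).symm
        (fun x : ↥N => e (x : ι) n (flo (x : ι)))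
        (fun p : Fin 1 → ↥N => pathVal e flo n (List.ofFn fun i => ((p i : ι)))) ?_
      intro x
      simp [pathVal, chainFn, List.ofFn_succ, Equiv.funUnique]
  | succ k ih =>
      intro n
      show ∑ n' ∈ N, e n' n (tailFn N e flo (k + 1) n') = _
      have step : ∀ n' ∈ N, e n' n (tailFn N e flo (k + 1) n') =
          ∑ p : Fin (k + 1) → ↥N, pathVal e flo n
            (List.ofFn (fun i => ((p i : ι))) ++ [n']) := by
        intro n' hn'
        rw [ih n', eFn_sum e he he0]
        refine Finset.sum_congr rfl fun p _ => ?_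
        rw [pathVal_snoc e flo _ (by simp [List.ofFn_succ]) n' n]
      rw [Finset.sum_congr rfl step, ← Finset.sum_coe_sort, ← Fintype.sum_prod_type']
      refine Fintype.sum_equiv (Fin.snocEquiv (fun _ => ↥N))
        (fun z : ↥N × (Fin (k + 1) → ↥N) =>
          pathVal e flo n (List.ofFn (fun i => ((z.2 i : ι))) ++ [(z.1 : ι)]))
        (fun q : Fin (k + 2) → ↥N => pathVal e flo n (List.ofFn fun i => ((q i : ι)))) ?_
      intro z
      beta_reduce
      congr 1
      have h1 : (fun i => (((Fin.snocEquiv (fun _ => ↥N)) z i : ι))) =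
          Fin.snoc (fun i => ((z.2 i : ι))) ((z.1 : ι)) := by
        funext i
        rw [Fin.snocEquiv_apply]
        exact (congrFun (Fin.comp_snoc (fun (x : ↥N) => (x : ι)) z.2 z.1) i)
      rw [h1, ofFn_snoc']

lemma not_nodup_split : ∀ l : List ι, ¬l.Nodup →
    ∃ (a : List ι) (x : ι) (b c : List ι), l = a ++ x :: (b ++ x :: c) := by
  intro l
  induction l with
  | nil => intro h; exact absurd List.nodup_nil h
  | cons y t ih =>
      intro h
      by_cases hy : y ∈ t
      · obtain ⟨b, c, rfl⟩ := List.append_of_mem hy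
        exact ⟨[], y, b, c, rfl⟩
      · have ht : ¬t.Nodup := fun hn => h (List.nodup_cons.mpr ⟨hy, hn⟩)
        obtain ⟨a, x, b, c, rfl⟩ := ih ht
        exact ⟨y :: a, x, b, c, rfl⟩

end Aux

/-- Effectively acyclic flow graphs have unique flows among effectively acyclic
solutions of the flow equation. -/
theorem stmt11 {ι M : Type*} [AddCommMonoid M]
    (hpos : ∀ a b : M, a + b = 0 → a = 0 ∧ b = 0)
    (hcanc : ∀ a b c : M, a + b = a + c → b = c)
    (E : Set (M → M))
    (hEendo : ∀ f ∈ E, ∀ a b : M, f (a + b) = f a + f b)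
    (hEcomp : ∀ f ∈ E, ∀ g ∈ E, (f ∘ g) ∈ E)
    (hEadd : ∀ f ∈ E, ∀ g ∈ E, (fun m => f m + g m) ∈ E)
    (N : Finset ι) (e : ι → ι → M → M) (hE : ∀ a b, e a b ∈ E)
    (inf flo : ι → M)
    (hflow : FlowEqn N e inf flo) (hea : EffAcyclic N e flo) :
    ∀ flo' : ι → M, FlowEqn N e inf flo' → EffAcyclic N e flo' →
      ∀ n ∈ N, flo n = flo' n := by
  classical
  -- basic properties of the edge functions
  have he : ∀ a b m1 m2, e a b (m1 + m2) = e a b m1 + e a b m2 :=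
    fun a b m1 m2 => hEendo (e a b) (hE a b) m1 m2
  have he0 : ∀ a b, e a b 0 = 0 := by
    intro a b
    have h := he a b 0 0
    rw [add_zero] at h
    exact (hcanc (e a b 0) 0 (e a b 0) (by rw [add_zero, ← h])).symm
  -- m ≤ 0 implies m = 0
  have hle0 : ∀ m d : M, m + d = 0 → m = 0 := fun m d h => (hpos m d h).1
  -- every cycle propagates any flow value of an EA solution to 0
  have cycle : ∀ (g : ι → M), EffAcyclic N e g →
      ∀ x ∈ N, ∀ b : List ι, (∀ y ∈ b, y ∈ N) →
        chainFn e x b x (g x) = 0 := by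
    intro g hg x hx b hb
    set p : Fin (b.length + 1) → ι := Fin.cons x b.get with hp
    have hmem : ∀ i, p i ∈ N := by
      intro i
      refine Fin.cases ?_ ?_ i
      · simpa [hp] using hx
      · intro j
        simp only [hp, Fin.cons_succ]
        exact hb _ (List.get_mem b j)
    have hofn : List.ofFn p = x :: b := by
      rw [List.ofFn_succ]
      simp [hp, List.ofFn_get]
    have h := hg b.length p hmem
    rw [hofn] at h
    have h0 : p 0 = x := rfl
    rw [h0] at h
    exact h
  -- chain values of a flow-equation solution are bounded by the flow
  have chain_le : ∀ (g : ι → M), FlowEqn N e inf g →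
      ∀ (l : List ι) (n1 : ι), n1 ∈ N → (∀ y ∈ l, y ∈ N) → ∀ n ∈ N,
        ∃ d, chainFn e n1 l n (g n1) + d = g n := by
    intro g hg l
    induction l with
    | nil =>
        intro n1 hn1 _ n hn
        refine ⟨inf n + ∑ x ∈ N.erase n1, e x n (g x), ?_⟩
        have := Finset.add_sum_erase N (fun x => e x n (g x)) hn1
        calc e n1 n (g n1) + (inf n + ∑ x ∈ N.erase n1, e x n (g x))
            = inf n + (e n1 n (g n1) + ∑ x ∈ N.erase n1, e x n (g x)) := by
                rw [← add_assoc, add_comm (e n1 n (g n1)) (inf n), add_assoc]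
          _ = inf n + ∑ x ∈ N, e x n (g x) := by rw [this]
          _ = g n := (hg n hn).symm
    | cons n2 t ih =>
        intro n1 hn1 hl n hn
        have hn2 : n2 ∈ N := hl n2 (by simp)
        have ht : ∀ y ∈ t, y ∈ N := fun y hy => hl y (by simp [hy])
        -- e n1 n2 (g n1) + d0 = g n2
        have hb : ∃ d0, e n1 n2 (g n1) + d0 = g n2 := by
          refine ⟨inf n2 + ∑ x ∈ N.erase n1, e x n2 (g x), ?_⟩
          have := Finset.add_sum_erase N (fun x => e x n2 (g x)) hn1
          calc e n1 n2 (g n1) + (inf n2 + ∑ x ∈ N.erase n1, e x n2 (g x))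
              = inf n2 + (e n1 n2 (g n1) + ∑ x ∈ N.erase n1, e x n2 (g x)) := by
                rw [← add_assoc, add_comm (e n1 n2 (g n1)) (inf n2), add_assoc]
            _ = inf n2 + ∑ x ∈ N, e x n2 (g x) := by rw [this]
            _ = g n2 := (hg n2 hn2).symm
        obtain ⟨d0, hd0⟩ := hb
        obtain ⟨d1, hd1⟩ := ih n2 hn2 ht n hn
        refine ⟨chainFn e n2 t n d0 + d1, ?_⟩
        show chainFn e n2 t n (e n1 n2 (g n1)) + (chainFn e n2 t n d0 + d1) = g n
        rw [← add_assoc, ← chainFn_add e he, hd0, hd1]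
  -- long paths vanish
  have vanish : ∀ (g : ι → M), FlowEqn N e inf g → EffAcyclic N e g →
      ∀ ns : List ι, (∀ y ∈ ns, y ∈ N) → N.card < ns.length →
        ∀ n, pathVal e g n ns = 0 := by
    intro g hg hga ns hns hlen n
    have hnodup : ¬ns.Nodup := by
      intro hnd
      have h1 : ns.toFinset ⊆ N := fun y hy => hns y (List.mem_toFinset.mp hy)
      have h2 := Finset.card_le_card h1
      rw [List.toFinset_card_of_nodup hnd] at h2
      omega
    obtain ⟨a, x, b, c, rfl⟩ := not_nodup_split _ hnodup
    have hx : x ∈ N := hns x (by simp)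
    have hb : ∀ y ∈ b, y ∈ N := fun y hy => hns y (by simp [hy])
    cases a with
    | nil =>
        show chainFn e x (b ++ x :: c) n (g x) = 0
        rw [chainFn_append e b x x c n (g x)]
        rw [show chainFn e x b x (g x) = 0 from cycle g hga x hx b hb]
        exact chainFn_zero e he0 c x n
    | cons a1 a' =>
        have ha1 : a1 ∈ N := hns a1 (by simp)
        have ha' : ∀ y ∈ a', y ∈ N := fun y hy => hns y (by simp [hy])
        show chainFn e a1 (a' ++ x :: (b ++ x :: c)) n (g a1) = 0
        rw [chainFn_append e a' a1 x (b ++ x :: c) n (g a1)]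
        rw [chainFn_append e b x x c n _]
        -- inner value is ≤ g x, so cycle sends it to something ≤ 0 hence 0
        obtain ⟨d, hd⟩ := chain_le g hg a' a1 ha1 ha' x hx
        have h1 : chainFn e x b x (chainFn e a1 a' x (g a1)) +
            chainFn e x b x d = 0 := by
          rw [← chainFn_add e he, hd]
          exact cycle g hga x hx b hb
        rw [hle0 _ _ h1]
        exact chainFn_zero e he0 c x n
  -- tails vanish at depth card N + 1
  have tail0 : ∀ (g : ι → M), FlowEqn N e inf g → EffAcyclic N e g →
      ∀ n, tailFn N e g (N.card + 1) n = 0 := by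
    intro g hg hga n
    rw [tail_formula N e he he0 g N.card n]
    refine Finset.sum_eq_zero fun p _ => ?_
    refine vanish g hg hga _ (by
      intro y hy
      rw [List.mem_ofFn] at hy
      obtain ⟨i, rfl⟩ := hy
      exact (p i).2) (by simp) n
  -- conclude
  intro flo' hflow' hea' n hn
  have h1 := flow_decomp N e he inf flo hflow (N.card + 1) n hn
  have h2 := flow_decomp N e he inf flo' hflow' (N.card + 1) n hn
  rw [tail0 flo hflow hea, add_zero] at h1
  rw [tail0 flo' hflow' hea', add_zero] at h2
  rw [h1, h2]
end

section
/- Replacement theorem: if I = I1 ⊕ I2 are valid flow interfaces, I1 ≲ I1' (contextual extension), the domains of I1' and I2 are disjoint, and for every node n in dom(I1') \ dom(I1) the outflow of I2 at n is 0, then I1' ⊕ I2 is defined, and I ≲ I1' ⊕ I2. -/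
/-- Contextual extension I ≲ I'. -/
def IntfLe {ι M : Type*} (I I' : Intf ι M) : Prop :=
  I.dom ⊆ I'.dom ∧ (∀ n ∈ I.dom, I.inflow n = I'.inflow n) ∧
  (∀ n ∉ I'.dom, I.outflow n = I'.outflow n)

/-- Replacement theorem: if I = I1 ⊕ I2, I1 ≲ I1', the domains of I1' and I2 are
disjoint, and I2 has outflow 0 at every new node of I1', then I1' ⊕ I2 is defined
and contextually extends I. -/
theorem stmt14 {ι M : Type*} [AddCommMonoid M] [DecidableEq ι]
    (hcanc : ∀ a b c : M, a + b = a + c → b = c)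
    (I1 I2 I I1' : Intf ι M)
    (hcomp : IntComp I1 I2 I) (hle : IntfLe I1 I1')
    (hdisj : Disjoint I1'.dom I2.dom)
    (hout : ∀ n ∈ I1'.dom, n ∉ I1.dom → I2.outflow n = 0) :
    ∃ I' : Intf ι M, IntComp I1' I2 I' ∧ IntfLe I I' := by
  obtain ⟨hd12, hdomI, hin1, hin2, houtI⟩ := hcomp
  obtain ⟨hsub, hinle, houtle⟩ := hle
  refine ⟨⟨I1'.dom ∪ I2.dom,
    fun n => if n ∈ I1'.dom ∧ n ∉ I1.dom then I1'.inflow n else I.inflow n,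
    fun n => I1'.outflow n + I2.outflow n⟩,
    ⟨hdisj, rfl, ?_, ?_, fun n _ => rfl⟩, ?_, ?_, ?_⟩
  · intro n hn
    by_cases h1 : n ∈ I1.dom
    · simp only [hn, h1, not_true_eq_false, and_false, if_false]
      rw [← hin1 n h1, hinle n h1]
    · simp only [hn, h1, not_false_eq_true, and_true, if_true, true_and, if_pos]
      rw [hout n hn h1, add_zero]
  · intro n hn
    have h1' : n ∉ I1'.dom := fun h => (Finset.disjoint_left.mp hdisj h) hn
    have h1 : n ∉ I1.dom := fun h => h1' (hsub h)
    simp only [h1', false_and, if_false]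
    rw [hin2 n hn, houtle n h1']
  · rw [hdomI]
    exact Finset.union_subset_union_left hsub
  · intro n hn
    rw [hdomI] at hn
    rcases Finset.mem_union.mp hn with h1 | h2
    · simp [h1]
    · have h1' : n ∉ I1'.dom := fun h => (Finset.disjoint_left.mp hdisj h) h2
      simp [h1']
  · intro n hn
    simp only [Finset.mem_union, not_or] at hn
    obtain ⟨h1', h2⟩ := hn
    have h1 : n ∉ I1.dom := fun h => h1' (hsub h)
    have hI : n ∉ I.dom := by rw [hdomI]; simp [h1, h2]
    rw [houtI n hI, houtle n h1']
end
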